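/- arXiv:1302.1650 — 5 statements merged into one kernel-verified Lean document; each statement's English description precedes it below -/
import Mathlib

section
/- For 0 < s < t ≤ 1 and I = (0,1), the inclusion BV^t(I) ⊆ BV^s(I) is strict: the step function u(x) = ∑_{n≥1} a_n 1_{( (n+1)^{-1}, n^{-1} ]}(x) with a_n = ∑_{p=1}^n (−1)^p p^{−t} belongs to BV^s(I) but not to BV^t(I). -/
open Set MeasureTheory Filter Topology ENNReal

/-- The `s`-total variation of `u` on a set `S ⊆ ℝ`: the supremum over all finite
subdivisions `x 0 < x 1 < ⋯ < x n` contained in `S` of `∑ |u (x (i+1)) - u (x i)| ^ (1/s)`. -/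
noncomputable def TVs (s : ℝ) (u : ℝ → ℝ) (S : Set ℝ) : ℝ≥0∞ :=
  sSup {v : ℝ≥0∞ | ∃ (n : ℕ) (x : ℕ → ℝ),
    (∀ i, i ≤ n → x i ∈ S) ∧ (∀ i, i < n → x i < x (i + 1)) ∧
    v = ∑ i ∈ Finset.range n, ENNReal.ofReal (|u (x (i + 1)) - u (x i)| ^ (1 / s))}

section aux

lemma alt_aux (f : ℕ → ℝ) (a : ℕ) (h0 : ∀ p, a < p → 0 ≤ f p)
    (hm : ∀ p, a < p → f (p + 1) ≤ f p) :
    ∀ b, a ≤ b →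
      0 ≤ (-1:ℝ)^(a+1) * (∑ p ∈ Finset.Ioc a b, (-1:ℝ)^p * f p)
          + min ((-1:ℝ)^(a+b) * f (b+1)) 0 ∧
      (-1:ℝ)^(a+1) * (∑ p ∈ Finset.Ioc a b, (-1:ℝ)^p * f p)
          + max ((-1:ℝ)^(a+b) * f (b+1)) 0 ≤ f (a+1) := by
  intro b hb
  induction b, hb using Nat.le_induction with
  | base =>
    have hev : (-1:ℝ)^(a+a) = 1 := by
      rw [← two_mul]; exact Even.neg_one_pow ⟨a, two_mul a⟩
    have h1 : 0 ≤ f (a+1) := h0 _ (Nat.lt_succ_self a)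
    simp only [Finset.Ioc_self, Finset.sum_empty, mul_zero, zero_add, hev, one_mul]
    rw [min_eq_right h1, max_eq_left h1]
    exact ⟨le_rfl, le_rfl⟩
  | succ b hab ih =>
    set S := ∑ p ∈ Finset.Ioc a b, (-1:ℝ)^p * f p with hS
    set T := (-1:ℝ)^(a+1) * S with hT
    have hsum : ∑ p ∈ Finset.Ioc a (b+1), (-1:ℝ)^p * f p = S + (-1:ℝ)^(b+1) * f (b+1) :=
      Finset.sum_Ioc_succ_top hab _
    have hpow : (-1:ℝ)^(a+1) * (-1:ℝ)^(b+1) = (-1:ℝ)^(a+b) := by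
      rw [← pow_add, show a+1+(b+1) = (a+b)+2 by ring, pow_add]; norm_num
    have hTmul : (-1:ℝ)^(a+1) * (S + (-1:ℝ)^(b+1) * f (b+1))
        = T + (-1:ℝ)^(a+b) * f (b+1) := by
      rw [hT, mul_add, ← mul_assoc, hpow]
    have hfb1 : 0 ≤ f (b+1) := h0 _ (Nat.lt_succ_of_le hab)
    have hfb2 : 0 ≤ f (b+1+1) := h0 _ (by omega)
    have hdec : f (b+1+1) ≤ f (b+1) := hm _ (by omega)
    rcases Nat.even_or_odd (a + b) with he | ho
    · have e1 : (-1:ℝ)^(a+b) = 1 := he.neg_one_pow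
      have e2 : (-1:ℝ)^(a+(b+1)) = -1 := by
        rw [show a+(b+1) = (a+b)+1 by ring, pow_succ, e1]; ring
      obtain ⟨ih1, ih2⟩ := ih
      rw [e1, one_mul, min_eq_right hfb1] at ih1
      rw [e1, one_mul, max_eq_left hfb1] at ih2
      have hmin : min ((-1:ℝ)^(a+(b+1)) * f (b+1+1)) 0 = -f (b+1+1) := by
        rw [e2, min_eq_left (by linarith)]; ring
      have hmax : max ((-1:ℝ)^(a+(b+1)) * f (b+1+1)) 0 = 0 := by
        rw [e2, max_eq_right (by linarith)]
      rw [hsum, hTmul, e1, one_mul, hmin, hmax]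
      constructor <;> linarith
    · have e1 : (-1:ℝ)^(a+b) = -1 := ho.neg_one_pow
      have e2 : (-1:ℝ)^(a+(b+1)) = 1 := by
        rw [show a+(b+1) = (a+b)+1 by ring, pow_succ, e1]; ring
      obtain ⟨ih1, ih2⟩ := ih
      rw [e1, min_eq_left (by linarith)] at ih1
      rw [e1, max_eq_right (by linarith)] at ih2
      have hmin : min ((-1:ℝ)^(a+(b+1)) * f (b+1+1)) 0 = 0 := by
        rw [e2, one_mul, min_eq_right hfb2]
      have hmax : max ((-1:ℝ)^(a+(b+1)) * f (b+1+1)) 0 = f (b+1+1) := by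
        rw [e2, one_mul, max_eq_left hfb2]
      rw [hsum, hTmul, e1, hmin, hmax]
      constructor <;> linarith

lemma alt_abs (f : ℕ → ℝ) (a : ℕ) (h0 : ∀ p, a < p → 0 ≤ f p)
    (hm : ∀ p, a < p → f (p + 1) ≤ f p) (b : ℕ) (hb : a ≤ b) :
    |∑ p ∈ Finset.Ioc a b, (-1:ℝ)^p * f p| ≤ f (a+1) := by
  obtain ⟨h1, h2⟩ := alt_aux f a h0 hm b hb
  have hminle : min ((-1:ℝ)^(a+b) * f (b+1)) 0 ≤ 0 := min_le_right _ _
  have hmaxge : (0:ℝ) ≤ max ((-1:ℝ)^(a+b) * f (b+1)) 0 := le_max_right _ _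
  set T := (-1:ℝ)^(a+1) * (∑ p ∈ Finset.Ioc a b, (-1:ℝ)^p * f p) with hT
  have hT0 : 0 ≤ T := by linarith
  have hTle : T ≤ f (a+1) := by linarith
  have habs : |∑ p ∈ Finset.Ioc a b, (-1:ℝ)^p * f p| = |T| := by
    rw [hT, abs_mul, abs_pow, abs_neg, abs_one, one_pow, one_mul]
  rw [habs, abs_of_nonneg hT0]; exact hTle

lemma A_diff (t : ℝ) (ht : 0 < t) (l k : ℕ) (hl : 1 ≤ l) (hlk : l ≤ k) :
    |(∑ p ∈ Finset.Icc 1 k, (-1:ℝ)^p / (p:ℝ)^t) - ∑ p ∈ Finset.Icc 1 l, (-1:ℝ)^p / (p:ℝ)^t|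
      ≤ (((l:ℝ)+1)^t)⁻¹ := by
  have hsub : Finset.Icc 1 l ⊆ Finset.Icc 1 k := Finset.Icc_subset_Icc_right hlk
  have hsd : Finset.Icc 1 k \ Finset.Icc 1 l = Finset.Ioc l k := by
    ext x; simp only [Finset.mem_sdiff, Finset.mem_Icc, Finset.mem_Ioc]; omega
  rw [← Finset.sum_sdiff_eq_sub hsub, hsd]
  have h0 : ∀ p : ℕ, l < p → 0 ≤ (((p:ℝ))^t)⁻¹ := by intro p _; positivity
  have hm : ∀ p : ℕ, l < p → ((((p+1:ℕ)):ℝ)^t)⁻¹ ≤ (((p:ℝ))^t)⁻¹ := by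
    intro p hp
    have hp0 : (0:ℝ) < (p:ℝ) := by exact_mod_cast lt_of_le_of_lt (Nat.zero_le l) hp
    have hle : ((p:ℝ))^t ≤ ((p+1:ℕ):ℝ)^t :=
      Real.rpow_le_rpow hp0.le (by push_cast; linarith) ht.le
    exact inv_anti₀ (Real.rpow_pos_of_pos hp0 t) hle
  have h := alt_abs (fun p : ℕ => (((p:ℝ))^t)⁻¹) l h0 hm k hlk
  have hcast : (((l+1:ℕ):ℝ)^t)⁻¹ = (((l:ℝ)+1)^t)⁻¹ := by push_cast; ring_nf
  rw [hcast] at h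
  calc |∑ p ∈ Finset.Ioc l k, (-1:ℝ)^p / (p:ℝ)^t|
      = |∑ p ∈ Finset.Ioc l k, (-1:ℝ)^p * (((p:ℝ))^t)⁻¹| := by
        simp only [div_eq_mul_inv]
    _ ≤ _ := h

lemma floor_facts (y : ℝ) (hy : y ∈ Set.Ioo (0:ℝ) 1) :
    1 ≤ ⌊y⁻¹⌋₊ ∧ ((⌊y⁻¹⌋₊ : ℝ) + 1)⁻¹ < y ∧ y ≤ ((⌊y⁻¹⌋₊ : ℝ))⁻¹ := by
  obtain ⟨hy0, hy1⟩ := hy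
  have hinv1 : 1 ≤ y⁻¹ := le_of_lt ((one_lt_inv_iff₀).mpr ⟨hy0, hy1⟩)
  have hfl1 : 1 ≤ ⌊y⁻¹⌋₊ := Nat.le_floor (by exact_mod_cast hinv1)
  have hfl0 : (0:ℝ) < (⌊y⁻¹⌋₊ : ℝ) := by exact_mod_cast hfl1
  have h1 : ((⌊y⁻¹⌋₊ : ℝ)) ≤ y⁻¹ := Nat.floor_le (by positivity)
  have h2 : y⁻¹ < (⌊y⁻¹⌋₊ : ℝ) + 1 := Nat.lt_floor_add_one _
  refine ⟨hfl1, ?_, ?_⟩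
  · have := inv_strictAnti₀ (by positivity : (0:ℝ) < y⁻¹) h2
    rwa [inv_inv] at this
  · have := inv_anti₀ hfl0 h1
    rwa [inv_inv] at this

end aux

theorem BVt_strict_subset_BVs (s t : ℝ) (hs : 0 < s) (hst : s < t) (ht : t ≤ 1)
    (u : ℝ → ℝ)
    (hu : ∀ n : ℕ, 1 ≤ n → ∀ x ∈ Set.Ioc ((n + 1 : ℝ)⁻¹) ((n : ℝ)⁻¹),
      u x = ∑ p ∈ Finset.Icc 1 n, (-1 : ℝ) ^ p / (p : ℝ) ^ t) :
    TVs s u (Set.Ioo (0 : ℝ) 1) < ⊤ ∧ TVs t u (Set.Ioo (0 : ℝ) 1) = ⊤ := by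
  have ht0 : 0 < t := hs.trans hst
  set A : ℕ → ℝ := fun k => ∑ p ∈ Finset.Icc 1 k, (-1:ℝ)^p / (p:ℝ)^t with hA
  have huA : ∀ y ∈ Set.Ioo (0:ℝ) 1, u y = A ⌊y⁻¹⌋₊ := by
    intro y hy
    obtain ⟨h1, h2, h3⟩ := floor_facts y hy
    exact hu _ h1 y ⟨h2, h3⟩
  constructor
  · -- finiteness of the s-variation
    have hq : 1 < t/s := (one_lt_div hs).mpr hst
    have hsummable : Summable (fun l : ℕ => ((l:ℝ)+1) ^ (-(t/s))) := by
      have h := (Real.summable_one_div_nat_rpow (p := t/s)).mpr hq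
      have h2 := (summable_nat_add_iff 1).mpr h
      refine h2.congr fun n => ?_
      push_cast
      rw [Real.rpow_neg (by positivity), one_div]
    set g : ℕ → ℝ≥0∞ := fun l => ENNReal.ofReal (((l:ℝ)+1) ^ (-(t/s))) with hg
    have hC : (∑' l, g l) ≠ ⊤ := by
      rw [hg, ← ENNReal.ofReal_tsum_of_nonneg (fun n => by positivity) hsummable]
      exact ENNReal.ofReal_ne_top
    refine lt_of_le_of_lt ?_ hC.lt_top
    unfold TVs
    apply sSup_le
    rintro v ⟨n, x, hxS, hxinc, rfl⟩
    have hmono : ∀ i j, i ≤ j → j ≤ n → x i ≤ x j := by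
      intro i j hij hjn
      induction j, hij using Nat.le_induction with
      | base => exact le_rfl
      | succ j hij ih =>
        exact le_trans (ih (by omega)) (hxinc j (by omega)).le
    set m : ℕ → ℕ := fun i => ⌊(x i)⁻¹⌋₊ with hmdef
    have hm1 : ∀ i, i ≤ n → 1 ≤ m i := fun i hi => (floor_facts _ (hxS i hi)).1
    have hux : ∀ i, i ≤ n → u (x i) = A (m i) := fun i hi => huA _ (hxS i hi)
    have hmanti : ∀ i j, i ≤ j → j ≤ n → m j ≤ m i := by
      intro i j hij hjn
      exact Nat.floor_mono (inv_anti₀ (hxS i (le_trans hij hjn)).1 (hmono i j hij hjn))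
    set c : ℕ → ℝ≥0∞ :=
      fun i => ENNReal.ofReal (|u (x (i+1)) - u (x i)| ^ (1/s)) with hc
    have hczero : ∀ i, i < n → m (i+1) = m i → c i = 0 := by
      intro i hi heq
      have : u (x (i+1)) = u (x i) := by
        rw [hux (i+1) (by omega), hux i (by omega), heq]
      rw [hc]
      simp only [this, sub_self, abs_zero]
      rw [Real.zero_rpow (by positivity)]
      exact ENNReal.ofReal_zero
    have hcle : ∀ i, i < n → m (i+1) < m i → c i ≤ g (m (i+1)) := by
      intro i hi hlt
      set l := m (i+1) with hl
      have hl1 : 1 ≤ l := hm1 (i+1) (by omega)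
      have hd : |A (m i) - A l| ≤ (((l:ℝ)+1)^t)⁻¹ := A_diff t ht0 l (m i) hl1 hlt.le
      have hdiff : |u (x (i+1)) - u (x i)| = |A (m i) - A l| := by
        rw [hux (i+1) (by omega), hux i (by omega), ← hl, abs_sub_comm]
      have hposl : (0:ℝ) < (l:ℝ) + 1 := by positivity
      have hrw : ((((l:ℝ)+1)^t)⁻¹) ^ (1/s) = ((l:ℝ)+1) ^ (-(t/s)) := by
        rw [← Real.rpow_neg hposl.le t, ← Real.rpow_mul hposl.le]
        congr 1; field_simp
      have hb : |u (x (i+1)) - u (x i)| ^ (1/s) ≤ ((l:ℝ)+1) ^ (-(t/s)) := by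
        rw [← hrw, hdiff]
        exact Real.rpow_le_rpow (abs_nonneg _) hd (by positivity)
      exact ENNReal.ofReal_le_ofReal hb
    set D := (Finset.range n).filter (fun i => m (i+1) < m i) with hD
    have hsum_eq : ∑ i ∈ Finset.range n, c i = ∑ i ∈ D, c i := by
      rw [hD]
      refine (Finset.sum_filter_of_ne ?_).symm
      intro i hi hne
      rcases lt_or_eq_of_le (hmanti i (i+1) (by omega) (by
        simp only [Finset.mem_range] at hi; omega)) with h | h
      · exact h
      · exact absurd (hczero i (by simpa [Finset.mem_range] using hi) h) hne
    have hinj : ∀ i ∈ D, ∀ j ∈ D, m (i+1) = m (j+1) → i = j := by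
      intro i hi j hj heq
      simp only [hD, Finset.mem_filter, Finset.mem_range] at hi hj
      by_contra hne
      rcases Nat.lt_or_ge i j with h | h
      · have h1 : m j ≤ m (i+1) := hmanti (i+1) j (by omega) (by omega)
        omega
      · have h' : j < i := by omega
        have h1 : m i ≤ m (j+1) := hmanti (j+1) i (by omega) (by omega)
        omega
    calc ∑ i ∈ Finset.range n, c i = ∑ i ∈ D, c i := hsum_eq
      _ ≤ ∑ i ∈ D, g (m (i+1)) := Finset.sum_le_sum (fun i hi => by
          simp only [hD, Finset.mem_filter, Finset.mem_range] at hi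
          exact hcle i hi.1 hi.2)
      _ = ∑ l ∈ D.image (fun i => m (i+1)), g l := (Finset.sum_image hinj).symm
      _ ≤ ∑' l, g l := ENNReal.sum_le_tsum _
  · -- the t-variation is infinite
    have hdiv : Tendsto (fun N => ∑ i ∈ Finset.range N, ((i:ℝ)+3)⁻¹) atTop atTop := by
      refine (not_summable_iff_tendsto_nat_atTop_of_nonneg (fun i => by positivity)).mp ?_
      intro hsum
      have h3 : Summable (fun n : ℕ => 1 / (n:ℝ)) := by
        rw [← summable_nat_add_iff 3]
        refine hsum.congr fun n => ?_
        push_cast; rw [one_div]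
      exact Real.not_summable_one_div_natCast h3
    unfold TVs
    rw [sSup_eq_top]
    intro b hb
    obtain ⟨N, hN⟩ := (hdiv.eventually_gt_atTop b.toReal).exists
    refine ⟨∑ i ∈ Finset.range N, ENNReal.ofReal
      (|u ((((N+2-(i+1)):ℕ):ℝ)⁻¹) - u ((((N+2-i):ℕ):ℝ)⁻¹)| ^ (1/t)), ⟨N,
      fun i => (((N+2-i : ℕ)):ℝ)⁻¹, ?_, ?_, rfl⟩, ?_⟩
    · intro i hi
      have h2 : 2 ≤ N + 2 - i := by omega
      have h2' : (2:ℝ) ≤ ((N+2-i:ℕ):ℝ) := by exact_mod_cast h2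
      constructor
      · positivity
      · rw [inv_lt_one_iff₀]; right; linarith
    · intro i hi
      have e1 : N + 2 - (i+1) = N + 1 - i := by omega
      have h1 : ((N+1-i:ℕ):ℝ) < ((N+2-i:ℕ):ℝ) := by
        have : N+1-i < N+2-i := by omega
        exact_mod_cast this
      have h0 : (0:ℝ) < ((N+1-i:ℕ):ℝ) := by
        have : 0 < N+1-i := by omega
        exact_mod_cast this
      show ((N+2-i:ℕ):ℝ)⁻¹ < ((N+2-(i+1):ℕ):ℝ)⁻¹
      rw [e1]
      exact inv_strictAnti₀ h0 h1
    · -- value computation and comparison with b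
      have hval : ∀ i, i < N →
          ENNReal.ofReal (|u ((((N+2-(i+1)):ℕ):ℝ)⁻¹) - u ((((N+2-i):ℕ):ℝ)⁻¹)| ^ (1/t))
            = ENNReal.ofReal (((N+2-i:ℕ):ℝ)⁻¹) := by
        intro i hi
        have e1 : N + 2 - (i+1) = N + 1 - i := by omega
        set j := N + 1 - i with hj
        have hj2 : 2 ≤ j := by omega
        have hjk : N + 2 - i = j + 1 := by omega
        -- u at the two points
        have hu1 : u (((j:ℕ):ℝ)⁻¹) = A j := by
          apply hu j (by omega)
          constructor
          · apply inv_strictAnti₀ (by positivity) (by linarith [show (0:ℝ) < (j:ℝ) by exact_mod_cast (by omega : 0 < j)])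
          · exact le_rfl
        have hu2 : u ((((j+1:ℕ)):ℝ)⁻¹) = A (j+1) := by
          apply hu (j+1) (by omega)
          constructor
          · push_cast
            apply inv_strictAnti₀ (by positivity)
            linarith
          · push_cast; exact le_rfl
        have hAdiff : A (j+1) - A j = (-1:ℝ)^(j+1) / ((j+1:ℕ):ℝ)^t := by
          simp only [hA]
          rw [Finset.sum_Icc_succ_top (by omega : 1 ≤ j + 1)]
          ring
        have hjpos : (0:ℝ) < ((j+1:ℕ):ℝ) := by positivity
        have habs : |u ((((N+2-(i+1)):ℕ):ℝ)⁻¹) - u ((((N+2-i):ℕ):ℝ)⁻¹)|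
            = (((j+1:ℕ):ℝ)^t)⁻¹ := by
          rw [e1, hjk, hu1, hu2]
          rw [show A j - A (j+1) = -(A (j+1) - A j) by ring, hAdiff, abs_neg, abs_div,
            abs_pow, abs_neg, abs_one, one_pow, one_div,
            abs_of_nonneg (Real.rpow_nonneg hjpos.le t)]
        rw [habs]
        have hrw : ((((j+1:ℕ):ℝ))^t)⁻¹ ^ (1/t) = (((j+1:ℕ):ℝ))⁻¹ := by
          rw [← Real.rpow_neg hjpos.le t, ← Real.rpow_mul hjpos.le]
          rw [show -t * (1/t) = -1 by field_simp, Real.rpow_neg_one]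
        rw [hrw, hjk]
      rw [Finset.sum_congr rfl (fun i hi => hval i (Finset.mem_range.mp hi))]
      have hreflect : ∑ i ∈ Finset.range N, ENNReal.ofReal (((N+2-i:ℕ):ℝ)⁻¹)
          = ∑ i ∈ Finset.range N, ENNReal.ofReal (((i:ℝ)+3)⁻¹) := by
        rw [← Finset.sum_range_reflect (fun i => ENNReal.ofReal (((i:ℝ)+3)⁻¹)) N]
        refine Finset.sum_congr rfl fun i hi => ?_
        have hi' := Finset.mem_range.mp hi
        congr 1
        have : N + 2 - i = (N - 1 - i) + 3 := by omega
        rw [this]; push_cast; ring_nf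
      rw [hreflect, ← ENNReal.ofReal_sum_of_nonneg (fun i _ => by positivity)]
      exact (ENNReal.lt_ofReal_iff_toReal_lt hb.ne).mpr hN
end

section
/- If u : I → ℝ has finite s-total variation on the interval I for some s ∈ (0,1], then u is a regulated function: u has finite one-sided limits at every interior point of I (a right limit at every point that is not the right endpoint, and a left limit at every point that is not the left endpoint). -/
open Set MeasureTheory Filter Topology ENNReal

lemma tvs_ge (s : ℝ) (u : ℝ → ℝ) (S : Set ℝ) (n : ℕ) (x : ℕ → ℝ)
    (h1 : ∀ i, i ≤ n → x i ∈ S) (h2 : ∀ i, i < n → x i < x (i + 1)) :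
    ∑ i ∈ Finset.range n, ENNReal.ofReal (|u (x (i + 1)) - u (x i)| ^ (1 / s)) ≤ TVs s u S :=
  le_sSup ⟨n, x, h1, h2, rfl⟩

lemma pairs_bound (s : ℝ) (hs0 : 0 < s) (u : ℝ → ℝ) (S : Set ℝ) (ε : ℝ) (hε : 0 < ε) (N : ℕ)
    (P : ℕ → ℝ × ℝ)
    (hmem1 : ∀ k, k < N → (P k).1 ∈ S) (hmem2 : ∀ k, k < N → (P k).2 ∈ S)
    (hlt : ∀ k, k < N → (P k).1 < (P k).2)
    (hsep : ∀ k, k + 1 < N → (P k).2 < (P (k + 1)).1)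
    (hbig : ∀ k, k < N → ε ≤ |u (P k).2 - u (P k).1|) :
    (N : ℝ≥0∞) * ENNReal.ofReal (ε ^ (1 / s)) ≤ TVs s u S := by
  rcases Nat.eq_zero_or_pos N with h | hN
  · simp [h]
  set x : ℕ → ℝ := fun i => if i % 2 = 0 then (P (i / 2)).1 else (P (i / 2)).2 with hx
  have hmemx : ∀ i, i ≤ 2 * N - 1 → x i ∈ S := by
    intro i hi
    have hiN : i / 2 < N := by omega
    by_cases h2 : i % 2 = 0
    · simpa [hx, h2] using hmem1 _ hiN
    · simpa [hx, h2] using hmem2 _ hiN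
  have hmono : ∀ i, i < 2 * N - 1 → x i < x (i + 1) := by
    intro i hi
    by_cases h2 : i % 2 = 0
    · have e1 : (i + 1) % 2 = 1 := by omega
      have e2 : (i + 1) / 2 = i / 2 := by omega
      simp only [hx, h2, e1, e2, if_true]
      simpa using hlt _ (by omega)
    · have e1 : (i + 1) % 2 = 0 := by omega
      have e2 : (i + 1) / 2 = i / 2 + 1 := by omega
      simp only [hx, h2, e1, e2, if_true, if_false]
      exact hsep _ (by omega)
  set f : ℕ → ℝ≥0∞ := fun i => ENNReal.ofReal (|u (x (i + 1)) - u (x i)| ^ (1 / s)) with hf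
  have hterm : ∀ j, j < N → ENNReal.ofReal (ε ^ (1 / s)) ≤ f (2 * j) := by
    intro j hj
    have e0 : x (2 * j) = (P j).1 := by
      have h2 : (2 * j) % 2 = 0 := by omega
      have h3 : (2 * j) / 2 = j := by omega
      simp [hx, h2, h3]
    have e1 : x (2 * j + 1) = (P j).2 := by
      have h2 : (2 * j + 1) % 2 = 1 := by omega
      have h3 : (2 * j + 1) / 2 = j := by omega
      simp [hx, h2, h3]
    rw [hf]
    simp only [e0, e1]
    exact ENNReal.ofReal_le_ofReal
      (Real.rpow_le_rpow hε.le (hbig _ hj) (by positivity))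
  calc (N : ℝ≥0∞) * ENNReal.ofReal (ε ^ (1 / s))
      = ∑ _j ∈ Finset.range N, ENNReal.ofReal (ε ^ (1 / s)) := by
        simp [Finset.sum_const, nsmul_eq_mul]
    _ ≤ ∑ j ∈ Finset.range N, f (2 * j) :=
        Finset.sum_le_sum fun j hj => hterm j (Finset.mem_range.mp hj)
    _ = ∑ i ∈ (Finset.range N).image (fun j => 2 * j), f i := by
        rw [Finset.sum_image (by intro a _ b _ h; simp only at h; omega)]
    _ ≤ ∑ i ∈ Finset.range (2 * N - 1), f i := by
        apply Finset.sum_le_sum_of_subset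
        intro i hi
        simp only [Finset.mem_image, Finset.mem_range] at hi ⊢
        obtain ⟨j, hj, rfl⟩ := hi
        omega
    _ ≤ TVs s u S := tvs_ge s u S (2 * N - 1) x hmemx hmono

lemma tvs_top_of_forall (s : ℝ) (u : ℝ → ℝ) (S : Set ℝ) (c : ℝ≥0∞) (hc0 : c ≠ 0) (hct : c ≠ ⊤)
    (h : ∀ N : ℕ, (N : ℝ≥0∞) * c ≤ TVs s u S) : TVs s u S = ⊤ := by
  by_contra hT
  have hdiv : TVs s u S / c ≠ ⊤ := by
    simp [ENNReal.div_eq_top, hc0, hT]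
  obtain ⟨n, hn⟩ := ENNReal.exists_nat_gt hdiv
  have : TVs s u S < n * c := by
    rwa [ENNReal.div_lt_iff (Or.inl hc0) (Or.inl hct)] at hn
  exact absurd (h n) this.not_ge

lemma osc_left (s : ℝ) (hs0 : 0 < s) (u : ℝ → ℝ) (I : Set ℝ) (hI : I.OrdConnected)
    (hfin : TVs s u I < ⊤) (a b : ℝ) (haI : a ∈ I) (hbI : b ∈ I) (hb : b < a)
    (ε : ℝ) (hε : 0 < ε) :
    ∃ δ > 0, ∀ x ∈ Ioo (a - δ) a, ∀ y ∈ Ioo (a - δ) a, |u x - u y| < ε := by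
  by_contra hcon
  push_neg at hcon
  have h' : ∀ t, t < a → ∃ pq : ℝ × ℝ, pq.1 ∈ I ∧ pq.2 ∈ I ∧ t < pq.1 ∧ pq.1 < pq.2 ∧
      pq.2 < a ∧ ε ≤ |u pq.2 - u pq.1| := by
    intro t ht
    have hmt := le_max_left t b
    have hmb := le_max_right t b
    have hma : max t b < a := max_lt ht hb
    obtain ⟨x, hx, y, hy, hxy⟩ := hcon (a - max t b) (by linarith)
    obtain ⟨hx1, hx2⟩ := hx
    obtain ⟨hy1, hy2⟩ := hy
    have hxI : x ∈ I := hI.out hbI haI ⟨by linarith, hx2.le⟩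
    have hyI : y ∈ I := hI.out hbI haI ⟨by linarith, hy2.le⟩
    have htx : t < x := by linarith
    have hty : t < y := by linarith
    have hne : x ≠ y := by
      rintro rfl; simp at hxy; linarith
    rcases hne.lt_or_gt with h | h
    · exact ⟨(x, y), hxI, hyI, htx, h, hy2, by rwa [abs_sub_comm]⟩
    · exact ⟨(y, x), hyI, hxI, hty, h, hx2, hxy⟩
  choose! F hF1 hF2 hF3 hF4 hF5 hF6 using h'
  set P : ℕ → ℝ × ℝ := fun k => Nat.rec (F b) (fun _ prev => F prev.2) k with hP
  have hstep : ∀ k, P (k + 1) = F (P k).2 := fun k => rfl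
  have h0 : P 0 = F b := rfl
  have inv : ∀ k, (P k).1 ∈ I ∧ (P k).2 ∈ I ∧ (P k).1 < (P k).2 ∧ (P k).2 < a ∧
      ε ≤ |u (P k).2 - u (P k).1| := by
    intro k
    induction k with
    | zero => exact ⟨hF1 b hb, hF2 b hb, hF4 b hb, hF5 b hb, hF6 b hb⟩
    | succ k ih =>
      have h2 := ih.2.2.2.1
      rw [hstep]
      exact ⟨hF1 _ h2, hF2 _ h2, hF4 _ h2, hF5 _ h2, hF6 _ h2⟩
  have hsep : ∀ k, (P k).2 < (P (k + 1)).1 := by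
    intro k
    rw [hstep]
    exact hF3 _ (inv k).2.2.2.1
  have hcpos : 0 < ε ^ (1 / s) := Real.rpow_pos_of_pos hε _
  have := tvs_top_of_forall s u I (ENNReal.ofReal (ε ^ (1 / s)))
    (by simp only [ne_eq, ENNReal.ofReal_eq_zero, not_le]; positivity) ENNReal.ofReal_ne_top
    (fun N => pairs_bound s hs0 u I ε hε N P (fun k _ => (inv k).1) (fun k _ => (inv k).2.1)
      (fun k _ => (inv k).2.2.1) (fun k _ => hsep k) (fun k _ => (inv k).2.2.2.2))
  rw [this] at hfin
  exact lt_irrefl _ hfin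

lemma osc_right (s : ℝ) (hs0 : 0 < s) (u : ℝ → ℝ) (I : Set ℝ) (hI : I.OrdConnected)
    (hfin : TVs s u I < ⊤) (a b : ℝ) (haI : a ∈ I) (hbI : b ∈ I) (hb : a < b)
    (ε : ℝ) (hε : 0 < ε) :
    ∃ δ > 0, ∀ x ∈ Ioo a (a + δ), ∀ y ∈ Ioo a (a + δ), |u x - u y| < ε := by
  by_contra hcon
  push_neg at hcon
  have h' : ∀ t, a < t → ∃ pq : ℝ × ℝ, pq.1 ∈ I ∧ pq.2 ∈ I ∧ a < pq.1 ∧ pq.1 < pq.2 ∧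
      pq.2 < t ∧ ε ≤ |u pq.2 - u pq.1| := by
    intro t ht
    have hmt := min_le_left t b
    have hmb := min_le_right t b
    have hma : a < min t b := lt_min ht hb
    obtain ⟨x, hx, y, hy, hxy⟩ := hcon (min t b - a) (by linarith)
    obtain ⟨hx1, hx2⟩ := hx
    obtain ⟨hy1, hy2⟩ := hy
    have hxI : x ∈ I := hI.out haI hbI ⟨hx1.le, by linarith⟩
    have hyI : y ∈ I := hI.out haI hbI ⟨hy1.le, by linarith⟩
    have htx : x < t := by linarith
    have hty : y < t := by linarith
    have hne : x ≠ y := by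
      rintro rfl; simp at hxy; linarith
    rcases hne.lt_or_gt with h | h
    · exact ⟨(x, y), hxI, hyI, hx1, h, hty, by rwa [abs_sub_comm]⟩
    · exact ⟨(y, x), hyI, hxI, hy1, h, htx, hxy⟩
  choose! F hF1 hF2 hF3 hF4 hF5 hF6 using h'
  set P : ℕ → ℝ × ℝ := fun k => Nat.rec (F b) (fun _ prev => F prev.1) k with hP
  have hstep : ∀ k, P (k + 1) = F (P k).1 := fun k => rfl
  have inv : ∀ k, (P k).1 ∈ I ∧ (P k).2 ∈ I ∧ (P k).1 < (P k).2 ∧ a < (P k).1 ∧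
      ε ≤ |u (P k).2 - u (P k).1| := by
    intro k
    induction k with
    | zero => exact ⟨hF1 b hb, hF2 b hb, hF4 b hb, hF3 b hb, hF6 b hb⟩
    | succ k ih =>
      have h2 := ih.2.2.2.1
      rw [hstep]
      exact ⟨hF1 _ h2, hF2 _ h2, hF4 _ h2, hF3 _ h2, hF6 _ h2⟩
  have hsep : ∀ k, (P (k + 1)).2 < (P k).1 := by
    intro k
    rw [hstep]
    exact hF5 _ (inv k).2.2.2.1
  have hcpos : 0 < ε ^ (1 / s) := Real.rpow_pos_of_pos hε _
  have key : ∀ N : ℕ, (N : ℝ≥0∞) * ENNReal.ofReal (ε ^ (1 / s)) ≤ TVs s u I := by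
    intro N
    apply pairs_bound s hs0 u I ε hε N (fun j => P (N - 1 - j))
    · exact fun k _ => (inv _).1
    · exact fun k _ => (inv _).2.1
    · exact fun k _ => (inv _).2.2.1
    · intro k hk
      show (P (N - 1 - k)).2 < (P (N - 1 - (k + 1))).1
      have he : N - 1 - k = (N - 1 - (k + 1)) + 1 := by omega
      rw [he]
      exact hsep _
    · exact fun k _ => (inv _).2.2.2.2
  have := tvs_top_of_forall s u I (ENNReal.ofReal (ε ^ (1 / s)))
    (by simp only [ne_eq, ENNReal.ofReal_eq_zero, not_le]; positivity) ENNReal.ofReal_ne_top key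
  rw [this] at hfin
  exact lt_irrefl _ hfin

theorem regulated_of_TVs_lt_top (s : ℝ) (hs0 : 0 < s) (hs1 : s ≤ 1) (u : ℝ → ℝ)
    (I : Set ℝ) (hI : I.OrdConnected) (hfin : TVs s u I < ⊤) :
    ∀ a ∈ I,
      ((∃ x ∈ I, a < x) →
        ∃ L : ℝ, Filter.Tendsto u (nhdsWithin a (Set.Ioi a)) (nhds L)) ∧
      ((∃ x ∈ I, x < a) →
        ∃ L : ℝ, Filter.Tendsto u (nhdsWithin a (Set.Iio a)) (nhds L)) := by
  intro a haI
  constructor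
  · rintro ⟨b, hbI, hab⟩
    have hcauchy : Cauchy (Filter.map u (𝓝[>] a)) := by
      rw [Metric.cauchy_iff]
      refine ⟨Filter.map_neBot, ?_⟩
      intro ε hε
      obtain ⟨δ, hδ, hosc⟩ := osc_right s hs0 u I hI hfin a b haI hbI hab ε hε
      refine ⟨u '' Ioo a (a + δ), Filter.image_mem_map (Ioo_mem_nhdsGT_of_mem ⟨le_refl a, by linarith⟩), ?_⟩
      rintro _ ⟨x, hx, rfl⟩ _ ⟨y, hy, rfl⟩
      rw [Real.dist_eq]
      exact hosc x hx y hy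
    obtain ⟨L, hL⟩ := CompleteSpace.complete hcauchy
    exact ⟨L, hL⟩
  · rintro ⟨b, hbI, hab⟩
    have hcauchy : Cauchy (Filter.map u (𝓝[<] a)) := by
      rw [Metric.cauchy_iff]
      refine ⟨Filter.map_neBot, ?_⟩
      intro ε hε
      obtain ⟨δ, hδ, hosc⟩ := osc_left s hs0 u I hI hfin a b haI hbI hab ε hε
      refine ⟨u '' Ioo (a - δ) a, Filter.image_mem_map (Ioo_mem_nhdsLT_of_mem ⟨by linarith, le_refl a⟩), ?_⟩
      rintro _ ⟨x, hx, rfl⟩ _ ⟨y, hy, rfl⟩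
      rw [Real.dist_eq]
      exact hosc x hx y hy
    obtain ⟨L, hL⟩ := CompleteSpace.complete hcauchy
    exact ⟨L, hL⟩
end

section
/- For u(x) = x·1_{[0,1]}(x) and any s ∈ (0,1), sup_{h>0} (1/h) ∫_ℝ |u(x+h) − u(x)|^{1/s} dx < 2 = TV^s u{ℝ}. Hence the inequality sup_{h>0} (1/h)∫|u(·+h)−u|^{1/s} ≤ TV^s u{ℝ} is in general strict. -/
open Set MeasureTheory Filter Topology ENNReal

noncomputable def uu : ℝ → ℝ := fun x => if x ∈ Icc (0:ℝ) 1 then x else 0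

lemma uu_of_mem {x : ℝ} (h0 : 0 ≤ x) (h1 : x ≤ 1) : uu x = x := if_pos ⟨h0, h1⟩
lemma uu_of_nonpos {x : ℝ} (h : x ≤ 0) : uu x = 0 := by
  unfold uu; split_ifs with h'
  · exact le_antisymm h h'.1
  · rfl
lemma uu_of_gt {x : ℝ} (h : 1 < x) : uu x = 0 := by
  unfold uu; split_ifs with h'
  · exact absurd h'.2 (not_le.2 h)
  · rfl
lemma uu_nonneg (x : ℝ) : 0 ≤ uu x := by
  unfold uu; split_ifs with h
  · exact h.1
  · exact le_refl 0
lemma uu_le_one (x : ℝ) : uu x ≤ 1 := by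
  unfold uu; split_ifs with h
  · exact h.2
  · norm_num

lemma rpow_le_self {t p : ℝ} (h0 : 0 ≤ t) (h1 : t ≤ 1) (hp : 1 ≤ p) : t ^ p ≤ t := by
  rcases eq_or_lt_of_le h0 with h | h
  · rw [← h, Real.zero_rpow (by linarith)]
  · calc t ^ p ≤ t ^ (1:ℝ) := Real.rpow_le_rpow_of_exponent_ge h h1 hp
      _ = t := Real.rpow_one t

noncomputable def FF : ℝ → ℝ := fun x => max 0 (min x 1) + (if 1 < x then 1 else 0)

lemma FF_of_nonpos {x : ℝ} (h : x ≤ 0) : FF x = 0 := by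
  unfold FF
  rw [if_neg (by linarith), max_eq_left (by simp [min_le_iff]; left; linarith), add_zero]
lemma FF_of_mem {x : ℝ} (h0 : 0 ≤ x) (h1 : x ≤ 1) : FF x = x := by
  unfold FF; rw [if_neg (by linarith), min_eq_left h1, max_eq_right h0, add_zero]
lemma FF_of_gt {x : ℝ} (h : 1 < x) : FF x = 2 := by
  unfold FF; rw [if_pos h, min_eq_right (by linarith), max_eq_right (by norm_num)]; norm_num
lemma FF_nonneg (x : ℝ) : 0 ≤ FF x := by unfold FF; positivity
lemma FF_le_two (x : ℝ) : FF x ≤ 2 := by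
  unfold FF; split_ifs <;> simp [min_def, max_def] <;> split_ifs <;> linarith

lemma abs_uu_sub_le {a b : ℝ} (hab : a ≤ b) : |uu b - uu a| ≤ FF b - FF a := by
  rcases lt_or_ge b 0 with hb | hb
  · rw [uu_of_nonpos hb.le, uu_of_nonpos (hab.trans hb.le), FF_of_nonpos hb.le,
      FF_of_nonpos (hab.trans hb.le)]; simp
  rcases lt_or_ge (1:ℝ) a with ha | ha
  · rw [uu_of_gt ha, uu_of_gt (lt_of_lt_of_le ha hab), FF_of_gt ha,
      FF_of_gt (lt_of_lt_of_le ha hab)]; simp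
  rcases lt_or_ge a 0 with ha0 | ha0
  · rw [uu_of_nonpos ha0.le, FF_of_nonpos ha0.le]
    rcases le_or_gt b 1 with hb1 | hb1
    · rw [uu_of_mem hb hb1, FF_of_mem hb hb1]; simp [abs_of_nonneg hb]
    · rw [uu_of_gt hb1, FF_of_gt hb1]; norm_num
  · rw [uu_of_mem ha0 ha, FF_of_mem ha0 ha]
    rcases le_or_gt b 1 with hb1 | hb1
    · rw [uu_of_mem hb hb1, FF_of_mem hb hb1, abs_of_nonneg (by linarith)]
    · rw [uu_of_gt hb1, FF_of_gt hb1, abs_of_nonpos (by linarith)]; linarith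

lemma tvs_sum_le {p : ℝ} (hp : 1 ≤ p) (n : ℕ) (x : ℕ → ℝ)
    (hmono : ∀ i, i < n → x i < x (i + 1)) :
    ∑ i ∈ Finset.range n, |uu (x (i + 1)) - uu (x i)| ^ p ≤ 2 := by
  have key : ∀ i ∈ Finset.range n,
      |uu (x (i + 1)) - uu (x i)| ^ p ≤ FF (x (i+1)) - FF (x i) := by
    intro i hi
    have hlt := hmono i (Finset.mem_range.1 hi)
    have h1 : |uu (x (i + 1)) - uu (x i)| ≤ 1 := by
      have h2 := uu_nonneg (x i); have h3 := uu_nonneg (x (i+1))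
      have h4 := uu_le_one (x i); have h5 := uu_le_one (x (i+1))
      rw [abs_le]; constructor <;> linarith
    calc |uu (x (i + 1)) - uu (x i)| ^ p ≤ |uu (x (i + 1)) - uu (x i)| :=
          rpow_le_self (abs_nonneg _) h1 hp
      _ ≤ FF (x (i+1)) - FF (x i) := abs_uu_sub_le hlt.le
  calc ∑ i ∈ Finset.range n, |uu (x (i + 1)) - uu (x i)| ^ p
      ≤ ∑ i ∈ Finset.range n, (FF (x (i+1)) - FF (x i)) := Finset.sum_le_sum key
    _ = FF (x n) - FF (x 0) := Finset.sum_range_sub (fun i => FF (x i)) n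
    _ ≤ 2 := by have := FF_le_two (x n); have := FF_nonneg (x 0); linarith

lemma uu_measurable : Measurable uu :=
  Measurable.ite measurableSet_Icc measurable_id measurable_const

lemma uu_eq_indicator : uu = (Icc (0:ℝ) 1).indicator id := by
  funext x; simp only [uu, Set.indicator_apply, id]

lemma uu_integrable : Integrable uu := by
  rw [uu_eq_indicator]
  exact (continuous_id.integrableOn_Icc).integrable_indicator measurableSet_Icc

lemma uu_integral : ∫ x, uu x = 1/2 := by
  rw [uu_eq_indicator, integral_indicator measurableSet_Icc, integral_Icc_eq_integral_Ioc,
    ← intervalIntegral.integral_of_le (by norm_num : (0:ℝ) ≤ 1)]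
  simp only [id]
  rw [integral_id]; norm_num

noncomputable def gg (p h : ℝ) (x : ℝ) : ℝ := |uu (x + h) - uu x| ^ p

lemma gg_nonneg (p h x : ℝ) : 0 ≤ gg p h x := Real.rpow_nonneg (abs_nonneg _) p

lemma abs_uu_sub_le_one (a b : ℝ) : |uu a - uu b| ≤ 1 := by
  have h2 := uu_nonneg a; have h3 := uu_nonneg b
  have h4 := uu_le_one a; have h5 := uu_le_one b
  rw [abs_le]; constructor <;> linarith

lemma gg_le_one {p : ℝ} (hp : 0 ≤ p) (h x : ℝ) : gg p h x ≤ 1 :=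
  Real.rpow_le_one (abs_nonneg _) (abs_uu_sub_le_one _ _) hp

lemma gg_measurable (p h : ℝ) (hp : 0 ≤ p) : Measurable (gg p h) :=
  (continuous_id.rpow_const (fun _ => Or.inr hp)).measurable.comp
    ((uu_measurable.comp (measurable_id.add_const h)).sub uu_measurable).abs

lemma gg_zero_outside {p h : ℝ} (hp : p ≠ 0) (hh : 0 < h) {x : ℝ}
    (hx : x ∉ Ioc (-h) 1) : gg p h x = 0 := by
  unfold gg
  rcases not_and_or.1 (fun hc => hx ⟨hc.1, hc.2⟩) with hx1 | hx2
  · push_neg at hx1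
    rw [uu_of_nonpos (by linarith : x + h ≤ 0), uu_of_nonpos (by linarith : x ≤ 0)]
    simp [Real.zero_rpow hp]
  · push_neg at hx2
    rw [uu_of_gt (by linarith : 1 < x + h), uu_of_gt hx2]
    simp [Real.zero_rpow hp]

lemma gg_integrable {p : ℝ} (hp : 1 ≤ p) {h : ℝ} (hh : 0 < h) : Integrable (gg p h) := by
  have hbd : Integrable ((Icc (-h) (1:ℝ)).indicator (fun _ => (1:ℝ))) :=
    (integrableOn_const measure_Icc_lt_top.ne).integrable_indicator measurableSet_Icc
  apply hbd.mono' ((gg_measurable p h (by linarith)).aestronglyMeasurable)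
  refine Filter.Eventually.of_forall (fun x => ?_)
  rw [Real.norm_of_nonneg (gg_nonneg p h x)]
  by_cases hx : x ∈ Icc (-h) (1:ℝ)
  · rw [Set.indicator_of_mem hx]; exact gg_le_one (by linarith) h x
  · rw [Set.indicator_of_notMem hx, gg_zero_outside (by linarith) hh
      (fun hc => hx ⟨hc.1.le, hc.2⟩)]

lemma integral_gg_le_one {p : ℝ} (hp : 1 ≤ p) {h : ℝ} (hh : 0 < h) :
    ∫ x, gg p h x ≤ 1 := by
  have hptwise : ∀ x, gg p h x ≤ uu (x + h) + uu x := by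
    intro x
    calc gg p h x ≤ |uu (x + h) - uu x| :=
          rpow_le_self (abs_nonneg _) (abs_uu_sub_le_one _ _) hp
      _ ≤ |uu (x + h)| + |uu x| := abs_sub _ _
      _ = uu (x + h) + uu x := by
          rw [abs_of_nonneg (uu_nonneg _), abs_of_nonneg (uu_nonneg _)]
  calc ∫ x, gg p h x ≤ ∫ x, (uu (x + h) + uu x) :=
        integral_mono (gg_integrable hp hh)
          ((uu_integrable.comp_add_right h).add uu_integrable) hptwise
    _ = 1 := by
        rw [integral_add (uu_integrable.comp_add_right h) uu_integrable,
          integral_add_right_eq_self uu h, uu_integral]; norm_num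

lemma integral_gg_le_small {p : ℝ} (hp : 1 ≤ p) {h : ℝ} (h0 : 0 < h) (h1 : h ≤ 1) :
    ∫ x, gg p h x ≤ (1 + h ^ (p - 1)) * h := by
  have hpne : p ≠ 0 := by linarith
  have hInd : gg p h = (Ioc (-h) (1:ℝ)).indicator (gg p h) := by
    funext x
    by_cases hx : x ∈ Ioc (-h) (1:ℝ)
    · rw [Set.indicator_of_mem hx]
    · rw [Set.indicator_of_notMem hx, gg_zero_outside hpne h0 hx]
  have hii : ∀ a b : ℝ, IntervalIntegrable (gg p h) volume a b :=
    fun a b => (gg_integrable hp h0).intervalIntegrable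
  have hsplit : ∫ x, gg p h x =
      ((∫ x in (-h)..0, gg p h x) + (∫ x in (0:ℝ)..(1-h), gg p h x))
        + (∫ x in (1-h)..1, gg p h x) := by
    calc ∫ x, gg p h x = ∫ x, (Ioc (-h) (1:ℝ)).indicator (gg p h) x := by rw [← hInd]
      _ = ∫ x in Ioc (-h) (1:ℝ), gg p h x := integral_indicator measurableSet_Ioc
      _ = ∫ x in (-h)..1, gg p h x :=
          (intervalIntegral.integral_of_le (by linarith : (-h) ≤ 1)).symm
      _ = (∫ x in (-h)..(1-h), gg p h x) + (∫ x in (1-h)..1, gg p h x) :=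
          (intervalIntegral.integral_add_adjacent_intervals (hii (-h) (1-h)) (hii (1-h) 1)).symm
      _ = ((∫ x in (-h)..0, gg p h x) + (∫ x in (0:ℝ)..(1-h), gg p h x))
            + (∫ x in (1-h)..1, gg p h x) := by
          rw [intervalIntegral.integral_add_adjacent_intervals (hii (-h) 0) (hii 0 (1-h))]
  have B1 : (∫ x in (-h)..0, gg p h x) ≤ h ^ (p - 1) * (h^2/2) := by
    have hmono : ∀ x ∈ Icc (-h) (0:ℝ), gg p h x ≤ h ^ (p-1) * (x + h) := by
      intro x hx
      have hx1 : -h ≤ x := hx.1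
      have hx2 : x ≤ 0 := hx.2
      have hge : 0 ≤ x + h := by linarith
      have : gg p h x = (x + h) ^ p := by
        unfold gg
        rw [uu_of_mem hge (by linarith), uu_of_nonpos hx2, sub_zero, abs_of_nonneg hge]
      rw [this]
      rcases eq_or_lt_of_le hge with hz | hz
      · rw [← hz, Real.zero_rpow hpne, mul_zero]
      · calc (x + h) ^ p = (x + h) ^ (p - 1) * (x + h) := by
              rw [← Real.rpow_add_one hz.ne' (p-1)]
              norm_num
          _ ≤ h ^ (p - 1) * (x + h) :=
              mul_le_mul_of_nonneg_right
                (Real.rpow_le_rpow hge (by linarith) (by linarith)) hge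
    calc (∫ x in (-h)..0, gg p h x) ≤ ∫ x in (-h)..0, h ^ (p-1) * (x + h) :=
          intervalIntegral.integral_mono_on (by linarith) (hii _ _)
            ((continuous_const.mul (continuous_id.add continuous_const)).intervalIntegrable _ _) hmono
      _ = h ^ (p - 1) * (h^2/2) := by
          rw [intervalIntegral.integral_const_mul]
          congr 1
          have := intervalIntegral.integral_comp_add_right (a := -h) (b := 0)
            (fun x : ℝ => x) h
          simp only [neg_add_cancel, zero_add] at this
          rw [this, integral_id]; ring
  have B2 : (∫ x in (0:ℝ)..(1-h), gg p h x) ≤ (1 - h) * (h ^ (p-1) * h) := by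
    have hmono : ∀ x ∈ Icc (0:ℝ) (1-h), gg p h x ≤ h ^ p := by
      intro x hx
      have hx1 : 0 ≤ x := hx.1
      have hx2 : x ≤ 1 - h := hx.2
      have : gg p h x = h ^ p := by
        unfold gg
        rw [uu_of_mem (by linarith) (by linarith), uu_of_mem hx1 (by linarith)]
        rw [show x + h - x = h by ring, abs_of_nonneg h0.le]
      rw [this]
    calc (∫ x in (0:ℝ)..(1-h), gg p h x) ≤ ∫ x in (0:ℝ)..(1-h), h ^ p :=
          intervalIntegral.integral_mono_on (by linarith) (hii _ _)
            (intervalIntegrable_const) hmono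
      _ = (1 - h) * (h ^ (p-1) * h) := by
          rw [intervalIntegral.integral_const, smul_eq_mul,
            show h ^ p = h ^ (p-1) * h by rw [← Real.rpow_add_one h0.ne' (p-1)]; norm_num]
          ring
  have B3 : (∫ x in (1-h)..1, gg p h x) ≤ h := by
    calc (∫ x in (1-h)..1, gg p h x) ≤ ∫ x in (1-h)..1, (1:ℝ) :=
          intervalIntegral.integral_mono_on (by linarith) (hii _ _)
            (intervalIntegrable_const) (fun x _ => gg_le_one (by linarith) h x)
      _ = h := by rw [intervalIntegral.integral_const, smul_eq_mul]; ring
  have ht : 0 ≤ h ^ (p - 1) := Real.rpow_nonneg h0.le _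
  rw [hsplit]
  nlinarith [mul_nonneg ht (sq_nonneg h), mul_nonneg ht h0.le]

theorem strict_Lip_inequality (s : ℝ) (hs0 : 0 < s) (hs1 : s < 1) :
    (⨆ h : {h : ℝ // 0 < h},
        (ENNReal.ofReal h.1)⁻¹ *
          ∫⁻ x, ENNReal.ofReal
            (|(if x + h.1 ∈ Set.Icc (0:ℝ) 1 then x + h.1 else 0) -
              (if x ∈ Set.Icc (0:ℝ) 1 then x else 0)| ^ (1 / s))) < 2 ∧
    TVs s (fun x => if x ∈ Set.Icc (0:ℝ) 1 then x else 0) Set.univ = 2 := by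
  set p : ℝ := 1 / s with hpdef
  have hp1 : 1 < p := one_lt_one_div hs0 hs1
  constructor
  · set C : ℝ := max (4/3) (1 + (3/4:ℝ) ^ (p - 1)) with hCdef
    have hC0 : (0:ℝ) ≤ C := le_trans (by norm_num) (le_max_left _ _)
    refine lt_of_le_of_lt (b := ENNReal.ofReal C) (iSup_le fun h => ?_) ?_
    · obtain ⟨h, hh⟩ := h
      show (ENNReal.ofReal h)⁻¹ * (∫⁻ x, ENNReal.ofReal (gg p h x)) ≤ ENNReal.ofReal C
      rw [← ofReal_integral_eq_lintegral_ofReal (gg_integrable hp1.le hh)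
        (Filter.Eventually.of_forall (gg_nonneg p h))]
      have key : ∫ x, gg p h x ≤ C * h := by
        rcases le_or_gt h (3/4) with hcase | hcase
        · calc ∫ x, gg p h x ≤ (1 + h ^ (p-1)) * h :=
                integral_gg_le_small hp1.le hh (by linarith)
            _ ≤ (1 + (3/4:ℝ) ^ (p-1)) * h := by
                have : h ^ (p-1) ≤ (3/4:ℝ) ^ (p-1) :=
                  Real.rpow_le_rpow hh.le hcase (by linarith)
                nlinarith
            _ ≤ C * h := mul_le_mul_of_nonneg_right (le_max_right _ _) hh.le
        · calc ∫ x, gg p h x ≤ 1 := integral_gg_le_one hp1.le hh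
            _ ≤ (4/3) * h := by linarith
            _ ≤ C * h := mul_le_mul_of_nonneg_right (le_max_left _ _) hh.le
      calc (ENNReal.ofReal h)⁻¹ * ENNReal.ofReal (∫ x, gg p h x)
          ≤ (ENNReal.ofReal h)⁻¹ * ENNReal.ofReal (C * h) :=
            mul_le_mul_right (ENNReal.ofReal_le_ofReal key) _
        _ = ENNReal.ofReal C := by
            rw [ENNReal.ofReal_mul hC0, mul_comm (ENNReal.ofReal C), ← mul_assoc,
              ENNReal.inv_mul_cancel (by simpa using hh) ENNReal.ofReal_ne_top, one_mul]
    · rw [show (2:ℝ≥0∞) = ENNReal.ofReal 2 by norm_num]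
      refine (ENNReal.ofReal_lt_ofReal_iff (by norm_num)).2 ?_
      refine max_lt (by norm_num) ?_
      have : (3/4:ℝ) ^ (p-1) < 1 :=
        Real.rpow_lt_one (by norm_num) (by norm_num) (by linarith)
      linarith
  · unfold TVs
    apply le_antisymm
    · apply sSup_le
      rintro v ⟨n, x, -, hmono, rfl⟩
      have hnn : ∀ i ∈ Finset.range n, 0 ≤ |uu (x (i+1)) - uu (x i)| ^ p :=
        fun i _ => Real.rpow_nonneg (abs_nonneg _) p
      show ∑ i ∈ Finset.range n, ENNReal.ofReal (|uu (x (i+1)) - uu (x i)| ^ p) ≤ 2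
      rw [← ENNReal.ofReal_sum_of_nonneg hnn]
      calc ENNReal.ofReal (∑ i ∈ Finset.range n, |uu (x (i+1)) - uu (x i)| ^ p)
          ≤ ENNReal.ofReal 2 := ENNReal.ofReal_le_ofReal (tvs_sum_le hp1.le n x hmono)
        _ = 2 := by norm_num
    · apply le_sSup
      refine ⟨2, fun i => (i:ℝ), fun _ _ => mem_univ _,
        fun i _ => by show (i:ℝ) < ((i+1:ℕ):ℝ); exact_mod_cast Nat.lt_succ_self i, ?_⟩
      show (2:ℝ≥0∞) = ∑ i ∈ Finset.range 2, ENNReal.ofReal (|uu (((i+1:ℕ)):ℝ) - uu ((i:ℕ):ℝ)| ^ p)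
      have e0 : uu (0:ℝ) = 0 := uu_of_nonpos le_rfl
      have e1 : uu (1:ℝ) = 1 := uu_of_mem zero_le_one le_rfl
      have e2 : uu (2:ℝ) = 0 := uu_of_gt _root_.one_lt_two
      norm_num [Finset.sum_range_succ, e0, e1, e2, Real.one_rpow]
end

section
/- Let (u_n) be a sequence of functions ℝ → ℝ converging pointwise to u on ℝ, and s ∈ (0,1]. Then TV^s u{ℝ} ≤ liminf_{n→∞} TV^s u_n{ℝ} (lower semicontinuity of the s-total variation under pointwise convergence). -/
open Set MeasureTheory Filter Topology ENNReal

theorem TVs_lsc_of_pointwise (s : ℝ) (hs0 : 0 < s) (hs1 : s ≤ 1)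
    (un : ℕ → ℝ → ℝ) (u : ℝ → ℝ)
    (hconv : ∀ x, Filter.Tendsto (fun n => un n x) Filter.atTop (nhds (u x))) :
    TVs s u Set.univ ≤ Filter.liminf (fun n => TVs s (un n) Set.univ) Filter.atTop := by
  apply sSup_le
  rintro v ⟨n, x, -, hx, rfl⟩
  set f : ℕ → ℝ≥0∞ := fun m =>
    ∑ i ∈ Finset.range n, ENNReal.ofReal (|un m (x (i + 1)) - un m (x i)| ^ (1 / s)) with hfdef
  have hf : Tendsto f atTop
      (nhds (∑ i ∈ Finset.range n, ENNReal.ofReal (|u (x (i + 1)) - u (x i)| ^ (1 / s)))) := by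
    apply tendsto_finset_sum
    intro i _
    have h1 : Tendsto (fun m => un m (x (i + 1)) - un m (x i)) atTop
        (nhds (u (x (i + 1)) - u (x i))) := (hconv _).sub (hconv _)
    have h2 := h1.abs
    have h3 : Tendsto (fun m => |un m (x (i + 1)) - un m (x i)| ^ (1 / s)) atTop
        (nhds (|u (x (i + 1)) - u (x i)| ^ (1 / s))) :=
      ((Real.continuousAt_rpow_const _ _ (Or.inr (by positivity))).tendsto.comp h2)
    exact (ENNReal.continuous_ofReal.tendsto _).comp h3
  have hle : ∀ m, f m ≤ TVs s (un m) Set.univ := fun m =>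
    le_sSup ⟨n, x, fun i _ => Set.mem_univ _, hx, rfl⟩
  calc ∑ i ∈ Finset.range n, ENNReal.ofReal (|u (x (i + 1)) - u (x i)| ^ (1 / s))
      = Filter.liminf f Filter.atTop := hf.liminf_eq.symm
    _ ≤ Filter.liminf (fun n => TVs s (un n) Set.univ) Filter.atTop :=
        Filter.liminf_le_liminf (Filter.Eventually.of_forall hle)
end

section
/- Let u : (0,∞) × ℝ → ℝ be P-periodic in x with mean m = (1/P)∫_0^P u(t,x)dx for every t > 0, and suppose u satisfies the one-sided Hölder condition u(t,y) − u(t,x) ≤ C (y−x)^s / t^s for all t > 0 and x < y, where s ∈ (0,1]. Then |u(t,x) − m| ≤ C P^s / t^s for all t > 0 and all x. -/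
open MeasureTheory

lemma per_int (f : ℝ → ℝ) (P : ℝ) (hP : 0 < P) (hf : Function.Periodic f P)
    (h0 : IntervalIntegrable f volume 0 P) (a : ℝ) :
    IntervalIntegrable f volume a (a + P) := by
  have hblock : ∀ k : ℤ, IntervalIntegrable f volume (k * P) (k * P + P) := by
    intro k
    have h := h0.comp_add_right (-(k * P))
    have heq : (fun x : ℝ => f (x + -(k * P))) = f := by
      funext x
      rw [← sub_eq_add_neg, hf.sub_int_mul_eq]
    rw [heq] at h
    simpa [zero_sub, sub_neg_eq_add, add_comm] using h
  set n : ℤ := ⌊a / P⌋ with hn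
  have h1 : (n : ℝ) * P ≤ a := by
    rw [← le_div_iff₀ hP]
    exact Int.floor_le _
  have h2 : a < (n : ℝ) * P + P := by
    have := Int.lt_floor_add_one (a / P)
    calc a = (a / P) * P := by field_simp
      _ < ((n : ℝ) + 1) * P := by
          exact mul_lt_mul_of_pos_right this hP
      _ = (n : ℝ) * P + P := by ring
  have hbig : IntervalIntegrable f volume ((n : ℝ) * P) ((n : ℝ) * P + P + P) := by
    have h := hblock (n + 1)
    have e1 : ((n + 1 : ℤ) : ℝ) * P = (n : ℝ) * P + P := by push_cast; ring
    rw [e1] at h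
    exact (hblock n).trans h
  exact hbig.mono_set (by
    rw [Set.uIcc_of_le (by linarith), Set.uIcc_of_le (by linarith)]
    exact Set.Icc_subset_Icc (by linarith) (by linarith))

theorem periodic_decay (u : ℝ → ℝ → ℝ) (P m C s : ℝ)
    (hP : 0 < P) (hC : 0 < C) (hs0 : 0 < s) (hs1 : s ≤ 1)
    (hper : ∀ t, 0 < t → ∀ x, u t (x + P) = u t x)
    (hint : ∀ t, 0 < t → IntervalIntegrable (u t) volume 0 P)
    (hmean : ∀ t, 0 < t → (1 / P) * ∫ x in (0:ℝ)..P, u t x = m)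
    (hols : ∀ t, 0 < t → ∀ x y : ℝ, x < y →
      u t y - u t x ≤ C * (y - x) ^ s / t ^ s) :
    ∀ t, 0 < t → ∀ x, |u t x - m| ≤ C * P ^ s / t ^ s := by
  intro t ht x
  set f := u t with hf
  have hpf : Function.Periodic f P := hper t ht
  set B := C * P ^ s / t ^ s with hB
  have hts : (0:ℝ) < t ^ s := Real.rpow_pos_of_pos ht s
  have hBpos : 0 < B := by
    apply div_pos (mul_pos hC (Real.rpow_pos_of_pos hP s)) hts
  have hbound : ∀ a b : ℝ, a < b → b - a ≤ P → f b - f a ≤ B := by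
    intro a b hab hba
    calc f b - f a ≤ C * (b - a) ^ s / t ^ s := hols t ht a b hab
      _ ≤ B := by
        rw [hB]
        have := Real.rpow_le_rpow (by linarith : (0:ℝ) ≤ b - a) hba hs0.le
        gcongr
  have hint1 : IntervalIntegrable f volume x (x + P) :=
    per_int f P hP hpf (hint t ht) x
  have hint2 : IntervalIntegrable f volume (x - P) x := by
    have := per_int f P hP hpf (hint t ht) (x - P)
    rwa [sub_add_cancel] at this
  have hm1 : (1 / P) * ∫ y in x..x + P, f y = m := by
    rw [hpf.intervalIntegral_add_eq x 0, zero_add]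
    exact hmean t ht
  have hm2 : (1 / P) * ∫ y in (x - P)..x, f y = m := by
    have := hpf.intervalIntegral_add_eq (x - P) 0
    rw [sub_add_cancel, zero_add] at this
    rw [this]
    exact hmean t ht
  -- upper bound for m
  have hup : m ≤ f x + B := by
    have hI : ∫ y in x..x + P, f y ≤ ∫ _ in x..x + P, (f x + B) := by
      apply intervalIntegral.integral_mono_on (by linarith) hint1
        intervalIntegrable_const
      intro y hy
      rcases eq_or_lt_of_le hy.1 with h | h
      · rw [← h]; linarith
      · have := hbound x y h (by linarith [hy.2])
        linarith
    rw [intervalIntegral.integral_const] at hI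
    have : ∫ y in x..x + P, f y ≤ P * (f x + B) := by
      simpa [smul_eq_mul] using hI
    rw [← hm1]
    rw [div_mul_eq_mul_div, one_mul, div_le_iff₀ hP]
    linarith
  -- lower bound for m
  have hlo : f x - B ≤ m := by
    have hI : ∫ _ in (x - P)..x, (f x - B) ≤ ∫ y in (x - P)..x, f y := by
      apply intervalIntegral.integral_mono_on (by linarith)
        intervalIntegrable_const hint2
      intro y hy
      rcases eq_or_lt_of_le hy.2 with h | h
      · rw [h]; linarith
      · have := hbound y x h (by linarith [hy.1])
        linarith
    rw [intervalIntegral.integral_const] at hI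
    have : P * (f x - B) ≤ ∫ y in (x - P)..x, f y := by
      have h : x - (x - P) = P := by ring
      simpa [smul_eq_mul, h] using hI
    rw [← hm2]
    rw [div_mul_eq_mul_div, one_mul, le_div_iff₀ hP]
    linarith
  rw [abs_le]
  constructor <;> [linarith; linarith]
end
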